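/- Fix d ∈ (0,2) and set ζ_{d,r} = d·(2−d)·(4−d)⋯(2r−2−d)/(2^r · r!) for integers r ≥ 1. Then for every y ∈ ℝ, ∫_ℝ (cosh(xy) − 1)·e^{−x²/2} · C_d/|x|^{d+1} dx = Σ_{r=1}^∞ ζ_{d,r} · y^{2r}/(1·3·5⋯(2r−1)), with the series on the right convergent, where C_d = d·2^{d/2−1}/Γ(1−d/2). -/

import Mathlib

open MeasureTheory Real

private lemma aux_moment {s : ℝ} (hs : -1 < s) :
    ∫ x : ℝ, |x| ^ s * Real.exp (-x ^ 2 / 2) = 2 ^ ((s + 1) / 2) * Real.Gamma ((s + 1) / 2) := by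
  have h1 : ∫ x : ℝ, |x| ^ s * Real.exp (-x ^ 2 / 2)
      = 2 * ∫ x in Set.Ioi (0:ℝ), x ^ s * Real.exp (-(1/2) * x ^ 2) := by
    rw [← integral_comp_abs (f := fun t : ℝ => t ^ s * Real.exp (-(1/2) * t ^ 2))]
    congr 1
    funext x
    simp only [sq_abs]
    rw [show -(1/2 : ℝ) * x ^ 2 = -x ^ 2 / 2 from by ring]
  rw [h1]
  have h2 : ∫ x in Set.Ioi (0:ℝ), x ^ s * Real.exp (-(1/2) * x ^ 2)
      = (1/2 : ℝ) ^ (-(s+1)/2) * (1/2) * Real.Gamma ((s+1)/2) := by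
    rw [← integral_rpow_mul_exp_neg_mul_rpow two_pos hs one_half_pos]
    refine setIntegral_congr_fun measurableSet_Ioi (fun x hx => ?_)
    rw [show ((2:ℝ)) = ((2:ℕ):ℝ) by norm_num, Real.rpow_natCast]
  have h3 : (1/2 : ℝ) ^ (-(s+1)/2) = (2:ℝ) ^ ((s+1)/2) := by
    rw [one_div, Real.inv_rpow (by norm_num), ← Real.rpow_neg (by norm_num)]
    congr 1; ring
  rw [h2, h3]; ring

private lemma aux_integrable {s : ℝ} (hs : -1 < s) :
    Integrable fun x : ℝ => |x| ^ s * Real.exp (-x ^ 2 / 2) := by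
  have base : IntegrableOn (fun x : ℝ => |x| ^ s * Real.exp (-x ^ 2 / 2)) (Set.Ioi 0) := by
    refine (integrableOn_rpow_mul_exp_neg_mul_sq one_half_pos hs).congr_fun
      (fun x hx => ?_) measurableSet_Ioi
    dsimp only
    rw [abs_of_pos hx, show -(1/2 : ℝ) * x ^ 2 = -x ^ 2 / 2 from by ring]
  have hIic : IntegrableOn (fun x : ℝ => |x| ^ s * Real.exp (-x ^ 2 / 2)) (Set.Iic 0) := by
    rw [← Measure.map_neg_eq_self (volume : Measure ℝ)]
    have m : MeasurableEmbedding fun x : ℝ => -x := (Homeomorph.neg ℝ).measurableEmbedding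
    rw [m.integrableOn_map_iff]
    simp_rw [Function.comp_def, abs_neg, neg_sq, Set.neg_preimage, Set.neg_Iic, neg_zero]
    exact (integrableOn_Ici_iff_integrableOn_Ioi).mpr base
  rw [← integrableOn_univ, ← Set.Iic_union_Ioi (a := (0:ℝ)), integrableOn_union]
  exact ⟨hIic, base⟩

private lemma aux_gamma_prod {a : ℝ} (ha : 0 < a) (r : ℕ) :
    Real.Gamma ((r : ℝ) + a) = (∏ i ∈ Finset.range r, ((i : ℝ) + a)) * Real.Gamma a := by
  induction r with
  | zero => simp
  | succ n ih =>
    have h : ((n + 1 : ℕ) : ℝ) + a = ((n : ℝ) + a) + 1 := by push_cast; ring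
    rw [h, Real.Gamma_add_one (by positivity), ih, Finset.prod_range_succ]
    ring

private lemma aux_factorial (r : ℕ) :
    ((Nat.factorial (2 * r)) : ℝ)
      = 2 ^ r * (Nat.factorial r : ℝ) * ∏ i ∈ Finset.range r, (2 * (i : ℝ) + 1) := by
  induction r with
  | zero => simp
  | succ n ih =>
    have h : Nat.factorial (2 * (n + 1)) = (2 * n + 2) * ((2 * n + 1) * Nat.factorial (2 * n)) := by
      rw [show 2 * (n + 1) = (2 * n + 1) + 1 by ring, Nat.factorial_succ,
        show 2 * n + 1 = (2 * n) + 1 from rfl, Nat.factorial_succ]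
    rw [h]
    push_cast [ih, Finset.prod_range_succ, Nat.factorial_succ]
    ring

/-- The zeta function of the inverse-power exceedance measure `H_d` is the convergent
power series `ζ(y) = Σ_{r≥1} ζ_{d,r} y^{2r} / (1·3⋯(2r-1))` with
`ζ_{d,r} = d(2-d)⋯(2r-2-d)/(2^r r!)`.  (The sum below is indexed by `r ∈ ℕ`,
corresponding to the term of index `r + 1 ≥ 1`.) -/
theorem inverse_power_zeta_series (d : ℝ) (hd : d ∈ Set.Ioo (0 : ℝ) 2) (y : ℝ) :
    HasSum
      (fun r : ℕ =>
        (d * ∏ i ∈ Finset.range r, (2 * ((i : ℝ) + 1) - d)) /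
            (2 ^ (r + 1) * (Nat.factorial (r + 1) : ℝ)) *
          (y ^ (2 * (r + 1)) / ∏ i ∈ Finset.range (r + 1), (2 * (i : ℝ) + 1)))
      (∫ x : ℝ, (Real.cosh (x * y) - 1) * Real.exp (-x ^ 2 / 2) *
        (d * 2 ^ (d / 2 - 1) / Real.Gamma (1 - d / 2) / |x| ^ (d + 1))) := by
  obtain ⟨hd0, hd2⟩ := hd
  have hΓ₀pos : 0 < Real.Gamma (1 - d / 2) := Real.Gamma_pos_of_pos (by linarith)
  set c := d * 2 ^ (d / 2 - 1) / Real.Gamma (1 - d / 2) with hc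
  have hcpos : 0 < c := by
    apply div_pos _ hΓ₀pos
    exact mul_pos hd0 (Real.rpow_pos_of_pos two_pos _)
  set T : ℕ → ℝ := fun r : ℕ =>
    (d * ∏ i ∈ Finset.range r, (2 * ((i : ℝ) + 1) - d)) /
        (2 ^ (r + 1) * (Nat.factorial (r + 1) : ℝ)) *
      (y ^ (2 * (r + 1)) / ∏ i ∈ Finset.range (r + 1), (2 * (i : ℝ) + 1)) with hTdef
  set F : ℕ → ℝ → ℝ := fun r x =>
    (x * y) ^ (2 * (r + 1)) / ((Nat.factorial (2 * (r + 1)) : ℝ)) *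
      (Real.exp (-x ^ 2 / 2) * (c / |x| ^ (d + 1))) with hF
  -- pointwise sum of the series
  have hpt : ∀ x : ℝ, HasSum (fun r => F r x)
      ((Real.cosh (x * y) - 1) * (Real.exp (-x ^ 2 / 2) * (c / |x| ^ (d + 1)))) := by
    intro x
    have h1 : HasSum (fun n : ℕ => (x * y) ^ (2 * (n + 1)) / ((Nat.factorial (2 * (n + 1)) : ℝ)))
        (Real.cosh (x * y) - 1) := by
      have h0 := (hasSum_nat_add_iff' (f := fun n : ℕ =>
        (x * y) ^ (2 * n) / ((Nat.factorial (2 * n) : ℝ))) 1).mpr (Real.hasSum_cosh (x * y))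
      convert h0 using 1
      · rfl
      simp
    exact h1.mul_right _
  have hae : ∀ᵐ x : ℝ, x ≠ 0 := by
    have h : {x : ℝ | ¬ x ≠ 0} = {0} := by ext; simp
    rw [ae_iff, h]
    exact measure_singleton 0
  have hs' : ∀ r : ℕ, (-1 : ℝ) < 2 * (r : ℝ) + 1 - d := by
    intro r
    have : (0:ℝ) ≤ (r : ℝ) := Nat.cast_nonneg r
    linarith
  -- pointwise factorization away from 0
  have hFval : ∀ (r : ℕ) (x : ℝ), x ≠ 0 →
      F r x = (y ^ (2 * (r + 1)) / ((Nat.factorial (2 * (r + 1)) : ℝ)) * c) *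
        (|x| ^ (2 * (r : ℝ) + 1 - d) * Real.exp (-x ^ 2 / 2)) := by
    intro r x hx
    have hxa : 0 < |x| := abs_pos.mpr hx
    have e1 : x ^ (2 * (r + 1)) = |x| ^ (2 * (r + 1)) := by
      rw [pow_mul, pow_mul, sq_abs]
    have e2 : |x| ^ (2 * (r : ℝ) + 1 - d) = |x| ^ (2 * (r + 1)) / |x| ^ (d + 1) := by
      rw [show (2 * (r : ℝ) + 1 - d) = ((2 * (r + 1) : ℕ) : ℝ) - (d + 1) by push_cast; ring,
        Real.rpow_sub hxa, Real.rpow_natCast]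
    simp only [hF]
    rw [mul_pow, e1, e2]
    ring
  have hFnonneg : ∀ (r : ℕ) (x : ℝ), 0 ≤ F r x := by
    intro r x
    have h1 : (0:ℝ) ≤ (x * y) ^ (2 * (r + 1)) := by
      rw [pow_mul]; positivity
    have h2 : (0:ℝ) ≤ Real.exp (-x ^ 2 / 2) * (c / |x| ^ (d + 1)) :=
      mul_nonneg (Real.exp_pos _).le
        (div_nonneg hcpos.le (Real.rpow_nonneg (abs_nonneg x) _))
    exact mul_nonneg (div_nonneg h1 (Nat.cast_nonneg _)) h2
  have hInt : ∀ r, Integrable (F r) := by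
    intro r
    have base := ((aux_integrable (hs' r)).const_mul
      (y ^ (2 * (r + 1)) / ((Nat.factorial (2 * (r + 1)) : ℝ)) * c))
    apply base.congr
    filter_upwards [hae] with x hx
    exact (hFval r x hx).symm
  -- value of each integral
  have hIntval : ∀ r : ℕ, ∫ x : ℝ, F r x
      = (y ^ (2 * (r + 1)) / ((Nat.factorial (2 * (r + 1)) : ℝ)) * c) *
        (2 ^ (((2 * (r : ℝ) + 1 - d) + 1) / 2) * Real.Gamma (((2 * (r : ℝ) + 1 - d) + 1) / 2)) := by
    intro r
    rw [← aux_moment (hs' r), ← integral_const_mul]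
    apply integral_congr_ae
    filter_upwards [hae] with x hx
    exact hFval r x hx
  -- each integral equals the target term
  have hT : ∀ r : ℕ, ∫ x : ℝ, F r x = T r := by
    intro r
    rw [hIntval r]
    have hexp : ((2 * (r : ℝ) + 1 - d) + 1) / 2 = (r : ℝ) + (1 - d / 2) := by ring
    rw [hexp, aux_gamma_prod (by linarith) r]
    have hfac : ((Nat.factorial (2 * (r + 1)) : ℝ))
        = 2 ^ (r + 1) * (Nat.factorial (r + 1) : ℝ)
          * ∏ i ∈ Finset.range (r + 1), (2 * (i : ℝ) + 1) := aux_factorial (r + 1)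
    have hprod : (∏ i ∈ Finset.range r, (2 * ((i : ℝ) + 1) - d))
        = 2 ^ r * ∏ i ∈ Finset.range r, ((i : ℝ) + (1 - d / 2)) := by
      calc (∏ i ∈ Finset.range r, (2 * ((i : ℝ) + 1) - d))
          = ∏ i ∈ Finset.range r, (2 * ((i : ℝ) + (1 - d / 2))) :=
            Finset.prod_congr rfl (fun i _ => by ring)
        _ = 2 ^ r * ∏ i ∈ Finset.range r, ((i : ℝ) + (1 - d / 2)) := by
            rw [Finset.prod_mul_distrib, Finset.prod_const, Finset.card_range]
    have hq : (0:ℝ) < (2:ℝ) ^ (1 - d / 2) := Real.rpow_pos_of_pos two_pos _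
    have e3 : (2:ℝ) ^ (d / 2 - 1) = ((2:ℝ) ^ (1 - d / 2))⁻¹ := by
      rw [show d / 2 - 1 = -(1 - d / 2) by ring, Real.rpow_neg (by norm_num)]
    have e4 : (2:ℝ) ^ ((r:ℝ) + (1 - d / 2)) = 2 ^ r * (2:ℝ) ^ (1 - d / 2) := by
      rw [Real.rpow_add two_pos, Real.rpow_natCast]
    have hQpos : (0:ℝ) < ∏ i ∈ Finset.range (r + 1), (2 * (i : ℝ) + 1) :=
      Finset.prod_pos fun i _ => by positivity
    have hfacpos : (0:ℝ) < (Nat.factorial (r + 1) : ℝ) := by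
      exact_mod_cast Nat.factorial_pos _
    have key : c * (2 ^ ((r:ℝ) + (1 - d / 2)) *
        ((∏ i ∈ Finset.range r, ((i : ℝ) + (1 - d / 2))) * Real.Gamma (1 - d / 2)))
        = d * 2 ^ r * ∏ i ∈ Finset.range r, ((i : ℝ) + (1 - d / 2)) := by
      rw [hc, e3, e4]
      have hΓpos := hΓ₀pos
      generalize hqq : (2:ℝ) ^ (1 - d / 2) = q at hq ⊢
      generalize hGG : Real.Gamma (1 - d / 2) = G at hΓpos ⊢
      generalize hRR : (∏ i ∈ Finset.range r, ((i : ℝ) + (1 - d / 2))) = R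
      field_simp
    simp only [hTdef]
    rw [hfac, hprod, mul_assoc, key]
    ring
  -- summability of the terms
  have hTnonneg : ∀ r, 0 ≤ T r := by
    intro r
    apply mul_nonneg
    · apply div_nonneg
      · exact mul_nonneg hd0.le (Finset.prod_nonneg fun i _ => by
          have : (0:ℝ) ≤ (i:ℝ) := Nat.cast_nonneg i
          linarith)
      · positivity
    · apply div_nonneg
      · rw [pow_mul]; positivity
      · exact (Finset.prod_pos fun i _ => by positivity).le
  have hTle : ∀ r : ℕ, T r ≤ y ^ 2 * ((y ^ 2) ^ r / (Nat.factorial r : ℝ)) := by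
    intro r
    have hfacpos : (0:ℝ) < (Nat.factorial (r + 1) : ℝ) := by exact_mod_cast Nat.factorial_pos _
    have hfacpos' : (0:ℝ) < (Nat.factorial r : ℝ) := by exact_mod_cast Nat.factorial_pos r
    have hQpos : (0:ℝ) < ∏ i ∈ Finset.range (r + 1), (2 * (i : ℝ) + 1) :=
      Finset.prod_pos fun i _ => by positivity
    have hP : (d * ∏ i ∈ Finset.range r, (2 * ((i : ℝ) + 1) - d))
        ≤ 2 * (2 ^ r * (Nat.factorial r : ℝ)) := by
      have h3 : (0:ℝ) ≤ (∏ i ∈ Finset.range r, (2 * ((i : ℝ) + 1) - d)) :=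
        Finset.prod_nonneg fun i _ => by
          have : (0:ℝ) ≤ (i:ℝ) := Nat.cast_nonneg i
          linarith
      have h1 : (∏ i ∈ Finset.range r, (2 * ((i : ℝ) + 1) - d))
          ≤ ∏ i ∈ Finset.range r, (2 * ((i : ℝ) + 1)) := by
        apply Finset.prod_le_prod
        · intro i _
          have : (0:ℝ) ≤ (i:ℝ) := Nat.cast_nonneg i
          linarith
        · intro i _; linarith
      have h2 : (∏ i ∈ Finset.range r, (2 * ((i : ℝ) + 1)))
          = 2 ^ r * (Nat.factorial r : ℝ) := by
        rw [Finset.prod_mul_distrib, Finset.prod_const, Finset.card_range]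
        congr 1
        exact_mod_cast Finset.prod_range_add_one_eq_factorial r
      calc d * ∏ i ∈ Finset.range r, (2 * ((i : ℝ) + 1) - d)
          ≤ 2 * ∏ i ∈ Finset.range r, (2 * ((i : ℝ) + 1) - d) :=
            mul_le_mul_of_nonneg_right (by linarith) h3
        _ ≤ 2 * (2 ^ r * (Nat.factorial r : ℝ)) := by
            rw [← h2]
            exact mul_le_mul_of_nonneg_left h1 (by norm_num)
    have hQ : ((Nat.factorial (r + 1) : ℝ)) ≤ ∏ i ∈ Finset.range (r + 1), (2 * (i : ℝ) + 1) := by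
      have h1 : (∏ i ∈ Finset.range (r + 1), ((i : ℝ) + 1))
          ≤ ∏ i ∈ Finset.range (r + 1), (2 * (i : ℝ) + 1) := by
        apply Finset.prod_le_prod
        · intro i _; positivity
        · intro i _
          have : (0:ℝ) ≤ (i:ℝ) := Nat.cast_nonneg i
          linarith
      refine le_trans (le_of_eq ?_) h1
      exact_mod_cast (Finset.prod_range_add_one_eq_factorial (r + 1)).symm
    have hy2 : (0:ℝ) ≤ (y ^ 2) ^ (r + 1) := by positivity
    calc T r
        = (d * ∏ i ∈ Finset.range r, (2 * ((i : ℝ) + 1) - d)) /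
            (2 ^ (r + 1) * (Nat.factorial (r + 1) : ℝ)) *
          ((y ^ 2) ^ (r + 1) / ∏ i ∈ Finset.range (r + 1), (2 * (i : ℝ) + 1)) := by
          simp only [hTdef, pow_mul]
      _ ≤ (2 * (2 ^ r * (Nat.factorial r : ℝ))) /
            (2 ^ (r + 1) * (Nat.factorial (r + 1) : ℝ)) *
          ((y ^ 2) ^ (r + 1) / (Nat.factorial (r + 1) : ℝ)) := by
          gcongr
      _ = (Nat.factorial r : ℝ) / (Nat.factorial (r + 1) : ℝ) *
          ((y ^ 2) ^ (r + 1) / (Nat.factorial (r + 1) : ℝ)) := by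
          rw [pow_succ]
          field_simp
      _ ≤ 1 * ((y ^ 2) ^ (r + 1) / (Nat.factorial r : ℝ)) := by
          gcongr
          · rw [div_le_one hfacpos]
            exact_mod_cast Nat.factorial_le (Nat.le_succ r)
          · exact Nat.le_succ r
      _ = y ^ 2 * ((y ^ 2) ^ r / (Nat.factorial r : ℝ)) := by
          rw [pow_succ]; ring
  have hSumT : Summable T :=
    Summable.of_nonneg_of_le hTnonneg hTle
      ((Real.summable_pow_div_factorial (y ^ 2)).mul_left (y ^ 2))
  have hnorm : ∀ r : ℕ, (∫ x : ℝ, ‖F r x‖) = T r := by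
    intro r
    rw [← hT r]
    apply integral_congr_ae
    exact Filter.Eventually.of_forall fun x => Real.norm_of_nonneg (hFnonneg r x)
  have hSum' : Summable (fun i : ℕ => ∫ a : ℝ, ‖F i a‖) := by
    simp only [hnorm]
    exact hSumT
  have H := hasSum_integral_of_summable_integral_norm (μ := (volume : Measure ℝ)) hInt hSum'
  have hfun : (fun i : ℕ => ∫ a : ℝ, F i a) = T := funext hT
  rw [hfun] at H
  have hval : (∫ a : ℝ, ∑' i : ℕ, F i a)
      = ∫ x : ℝ, (Real.cosh (x * y) - 1) * Real.exp (-x ^ 2 / 2) * (c / |x| ^ (d + 1)) := by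
    apply integral_congr_ae
    filter_upwards [hae] with x _
    rw [(hpt x).tsum_eq, mul_assoc]
  rw [hval] at H
  exact H
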